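/- arXiv:math/0703309 — 3 statements merged into one kernel-verified Lean document; each statement's English description precedes it below -/
import Mathlib

section
/- For functions f1, f2, g1, g2 : G → ℝ on an abelian group G with finite support, |∑_x (f1*f2)(x)·(g1*g2)(x)| ≤ T_2(f1)^{1/4} T_2(f2)^{1/4} T_2(g1)^{1/4} T_2(g2)^{1/4}, where (f*g)(x) = ∑_s f(s)g(x-s) and T_2(f) = ∑_x (f*f)(x)^2. -/
open Finset

variable {G : Type*} [AddCommGroup G]

/-- Additive convolution `(f * g)(x) = ∑_s f(s) g(x - s)`. -/
noncomputable def conv (f g : G → ℝ) (x : G) : ℝ := ∑ᶠ s, f s * g (x - s)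

/-- `T₂(f) = ∑_x (f * f)(x)^2`. -/
noncomputable def T2F (f : G → ℝ) : ℝ := ∑ᶠ x, (conv f f x) ^ 2

section Aux
open Pointwise
variable [DecidableEq G]

set_option linter.unusedSectionVars false

noncomputable def Dc (f g : G → ℝ) (t : G) : ℝ := ∑ᶠ a, f a * g (a + t)

lemma Dc_eq_sum {f : G → ℝ} (g : G → ℝ) {P : Finset G} (hP : Function.support f ⊆ ↑P) (t : G) :
    Dc f g t = ∑ a ∈ P, f a * g (a + t) :=
  finsum_eq_sum_of_support_subset _ (fun _ ha => hP (left_ne_zero_of_mul ha))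

lemma supp_Dc {f g : G → ℝ} {P Q : Finset G} (hP : Function.support f ⊆ ↑P)
    (hQ : Function.support g ⊆ ↑Q) :
    Function.support (Dc f g) ⊆ ↑(Q - P) := by
  intro t ht
  rw [Function.mem_support, Dc_eq_sum g hP] at ht
  obtain ⟨a, ha, hne⟩ := Finset.exists_ne_zero_of_sum_ne_zero ht
  have hq : a + t ∈ Q := Finset.mem_coe.1 (hQ (right_ne_zero_of_mul hne))
  exact Finset.mem_coe.2 (Finset.mem_sub.2 ⟨a + t, hq, a, ha, by abel⟩)

lemma expand {p q r s : G → ℝ} {P Q R : Finset G}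
    (hP : Function.support p ⊆ ↑P) (hQ : Function.support q ⊆ ↑Q)
    (hR : Function.support r ⊆ ↑R) :
    ∑ᶠ t, Dc p q t * Dc r s t
      = ∑ a ∈ P, ∑ x ∈ Q, ∑ b ∈ R, (p a * q x) * (r b * s (b + (x - a))) := by
  have h1 : Function.support (fun t => Dc p q t * Dc r s t) ⊆ ↑(Q - P) :=
    fun t ht => supp_Dc hP hQ (left_ne_zero_of_mul ht)
  rw [finsum_eq_sum_of_support_subset _ h1]
  simp_rw [Dc_eq_sum q hP, Dc_eq_sum s hR, Finset.sum_mul_sum]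
  rw [Finset.sum_comm]
  refine Finset.sum_congr rfl fun a ha => ?_
  set H : G → ℝ := fun x => ∑ b ∈ R, (p a * q x) * (r b * s (b + (x - a))) with hH
  have hsuppH : Function.support H ⊆ ↑Q := by
    intro x hx
    obtain ⟨b, hb, hne⟩ := Finset.exists_ne_zero_of_sum_ne_zero hx
    exact hQ (right_ne_zero_of_mul (left_ne_zero_of_mul hne))
  have hsupp_t : Function.support (fun t => H (a + t)) ⊆ ↑(Q - P) := by
    intro t ht
    have hmem : a + t ∈ Q := Finset.mem_coe.1 (hsuppH ht)
    exact Finset.mem_coe.2 (Finset.mem_sub.2 ⟨a + t, hmem, a, ha, by abel⟩)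
  calc ∑ t ∈ Q - P, ∑ b ∈ R, p a * q (a + t) * (r b * s (b + t))
      = ∑ t ∈ Q - P, H (a + t) := by
        refine Finset.sum_congr rfl fun t _ => Finset.sum_congr rfl fun b _ => ?_
        have : b + t = b + (a + t - a) := by abel
        rw [← this]
    _ = ∑ᶠ t, H (a + t) := (finsum_eq_sum_of_support_subset _ hsupp_t).symm
    _ = ∑ᶠ x, H x := finsum_comp_equiv (Equiv.addLeft a)
    _ = ∑ x ∈ Q, H x := finsum_eq_sum_of_support_subset _ hsuppH

lemma L1 {p q r s : G → ℝ} {P Q R : Finset G}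
    (hP : Function.support p ⊆ ↑P) (hQ : Function.support q ⊆ ↑Q)
    (hR : Function.support r ⊆ ↑R) :
    ∑ᶠ t, Dc p q t * Dc r s t = ∑ᶠ u, Dc p r u * Dc q s u := by
  rw [expand hP hQ hR, expand hP hR hQ]
  refine Finset.sum_congr rfl fun a _ => ?_
  rw [Finset.sum_comm]
  refine Finset.sum_congr rfl fun b _ => Finset.sum_congr rfl fun x _ => ?_
  have : x + (b - a) = b + (x - a) := by abel
  rw [this]; ring

lemma finsumCS {u v : G → ℝ} (hu : (Function.support u).Finite)
    (hv : (Function.support v).Finite) :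
    |∑ᶠ t, u t * v t| ≤ Real.sqrt (∑ᶠ t, u t ^ 2) * Real.sqrt (∑ᶠ t, v t ^ 2) := by
  classical
  set W : Finset G := hu.toFinset ∪ hv.toFinset with hW
  have hu' : Function.support u ⊆ ↑W := by
    intro x hx; simp [hW, Set.Finite.mem_toFinset, hx]
  have hv' : Function.support v ⊆ ↑W := by
    intro x hx; simp [hW, Set.Finite.mem_toFinset, hx]
  have e1 : ∑ᶠ t, u t * v t = ∑ t ∈ W, u t * v t :=
    finsum_eq_sum_of_support_subset _ (fun t ht => hu' (left_ne_zero_of_mul ht))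
  have e2 : ∑ᶠ t, u t ^ 2 = ∑ t ∈ W, u t ^ 2 :=
    finsum_eq_sum_of_support_subset _ (fun t ht => hu' (by
      simpa [Function.mem_support, pow_eq_zero_iff] using ht))
  have e3 : ∑ᶠ t, v t ^ 2 = ∑ t ∈ W, v t ^ 2 :=
    finsum_eq_sum_of_support_subset _ (fun t ht => hv' (by
      simpa [Function.mem_support, pow_eq_zero_iff] using ht))
  rw [e1, e2, e3]
  have h := Finset.sum_mul_sq_le_sq_mul_sq W u v
  have habs : |∑ t ∈ W, u t * v t| = Real.sqrt ((∑ t ∈ W, u t * v t) ^ 2) :=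
    (Real.sqrt_sq_eq_abs _).symm
  rw [habs, ← Real.sqrt_mul (by positivity)]
  exact Real.sqrt_le_sqrt h

lemma conv_eq_Dc (f g : G → ℝ) (x : G) : conv f g x = Dc (fun a => f (-a)) g x := by
  unfold conv Dc
  rw [← finsum_comp_equiv (Equiv.neg G) (f := fun a => f (-a) * g (a + x))]
  refine finsum_congr fun sVar => ?_
  simp [neg_add_eq_sub]

lemma Dc_negneg (f : G → ℝ) (t : G) :
    Dc (fun a => f (-a)) (fun a => f (-a)) t = Dc f f t := by
  unfold Dc
  have h1 : ∑ᶠ (a : G), f (-a) * f (-(a + t)) = ∑ᶠ (i : G), f i * f (i - t) := by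
    rw [← finsum_comp_equiv (Equiv.neg G) (f := fun a => f (-a) * f (-(a + t)))]
    refine finsum_congr fun i => ?_
    have e1 : -((Equiv.neg G) i) = i := by simp
    have e2 : -((Equiv.neg G) i + t) = i - t := by simp; abel
    rw [e1, e2]
  have h2 : ∑ᶠ (i : G), f i * f (i - t) = ∑ᶠ (b : G), f b * f (b + t) := by
    rw [← finsum_comp_equiv (Equiv.addRight t) (f := fun sVar => f sVar * f (sVar - t))]
    refine finsum_congr fun b => ?_
    have e1 : ((Equiv.addRight t) b : G) = b + t := rfl
    rw [e1, add_sub_cancel_right, mul_comm]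
  rw [h1, h2]

lemma supp_neg {f : G → ℝ} {F : Finset G} (hF : Function.support f ⊆ ↑F) :
    Function.support (fun a => f (-a)) ⊆ ↑(F.image (fun x => -x)) := by
  intro a ha
  exact Finset.mem_coe.2 (Finset.mem_image.2 ⟨-a, Finset.mem_coe.1 (hF ha), neg_neg a⟩)

lemma T2F_eq {f : G → ℝ} {F : Finset G} (hF : Function.support f ⊆ ↑F) :
    T2F f = ∑ᶠ t, Dc f f t ^ 2 := by
  unfold T2F
  simp_rw [conv_eq_Dc f f, pow_two]
  rw [L1 (supp_neg hF) hF (supp_neg hF)]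
  exact finsum_congr fun u => by rw [Dc_negneg]

lemma T2F_neg {f : G → ℝ} {F : Finset G} (hF : Function.support f ⊆ ↑F) :
    T2F (fun a => f (-a)) = T2F f := by
  rw [T2F_eq (supp_neg hF), T2F_eq hF]
  exact finsum_congr fun t => by rw [Dc_negneg]

lemma step2 {f g : G → ℝ} {F E : Finset G} (hF : Function.support f ⊆ ↑F)
    (hE : Function.support g ⊆ ↑E) :
    ∑ᶠ t, Dc f g t ^ 2 ≤ Real.sqrt (T2F f) * Real.sqrt (T2F g) := by
  have h0 : ∑ᶠ t, Dc f g t ^ 2 = ∑ᶠ t, Dc f g t * Dc f g t := by simp_rw [pow_two]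
  rw [h0, L1 hF hE hF]
  calc ∑ᶠ u, Dc f f u * Dc g g u ≤ |∑ᶠ u, Dc f f u * Dc g g u| := le_abs_self _
    _ ≤ Real.sqrt (∑ᶠ t, Dc f f t ^ 2) * Real.sqrt (∑ᶠ t, Dc g g t ^ 2) :=
        finsumCS ((F - F).finite_toSet.subset (supp_Dc hF hF))
          ((E - E).finite_toSet.subset (supp_Dc hE hE))
    _ = Real.sqrt (T2F f) * Real.sqrt (T2F g) := by rw [← T2F_eq hF, ← T2F_eq hE]

lemma ssr {x : ℝ} (hx : 0 ≤ x) : Real.sqrt (Real.sqrt x) = x ^ ((1 : ℝ)/4) := by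
  rw [Real.sqrt_eq_rpow, Real.sqrt_eq_rpow, ← Real.rpow_mul hx]
  norm_num

lemma T2F_nonneg (f : G → ℝ) : 0 ≤ T2F f := finsum_nonneg fun x => sq_nonneg _

end Aux

theorem stmt1 (f1 f2 g1 g2 : G → ℝ)
    (hf1 : (Function.support f1).Finite) (hf2 : (Function.support f2).Finite)
    (hg1 : (Function.support g1).Finite) (hg2 : (Function.support g2).Finite) :
    |∑ᶠ x, conv f1 f2 x * conv g1 g2 x| ≤
      (T2F f1) ^ ((1 : ℝ)/4) * (T2F f2) ^ ((1 : ℝ)/4) *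
        (T2F g1) ^ ((1 : ℝ)/4) * (T2F g2) ^ ((1 : ℝ)/4) := by
  classical
  have hF1 : Function.support f1 ⊆ ↑hf1.toFinset := fun x hx => hf1.mem_toFinset.2 hx
  have hF2 : Function.support f2 ⊆ ↑hf2.toFinset := fun x hx => hf2.mem_toFinset.2 hx
  have hG1 : Function.support g1 ⊆ ↑hg1.toFinset := fun x hx => hg1.mem_toFinset.2 hx
  have hG2 : Function.support g2 ⊆ ↑hg2.toFinset := fun x hx => hg2.mem_toFinset.2 hx
  simp_rw [conv_eq_Dc]
  rw [L1 (supp_neg hF1) hF2 (supp_neg hG1)]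
  have hfin1 : (Function.support (Dc (fun a => f1 (-a)) (fun a => g1 (-a)))).Finite :=
    Finset.finite_toSet _ |>.subset (supp_Dc (supp_neg hF1) (supp_neg hG1))
  have hfin2 : (Function.support (Dc f2 g2)).Finite :=
    Finset.finite_toSet _ |>.subset (supp_Dc hF2 hG2)
  have hcs := finsumCS hfin1 hfin2
  have hs1 : ∑ᶠ t, Dc (fun a => f1 (-a)) (fun a => g1 (-a)) t ^ 2 ≤
      Real.sqrt (T2F f1) * Real.sqrt (T2F g1) := by
    have := step2 (supp_neg hF1) (supp_neg hG1)
    rwa [T2F_neg hF1, T2F_neg hG1] at this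
  have hs2 : ∑ᶠ t, Dc f2 g2 t ^ 2 ≤ Real.sqrt (T2F f2) * Real.sqrt (T2F g2) :=
    step2 hF2 hG2
  calc |∑ᶠ u, Dc (fun a => f1 (-a)) (fun a => g1 (-a)) u * Dc f2 g2 u|
      ≤ Real.sqrt (∑ᶠ t, Dc (fun a => f1 (-a)) (fun a => g1 (-a)) t ^ 2) *
        Real.sqrt (∑ᶠ t, Dc f2 g2 t ^ 2) := hcs
    _ ≤ Real.sqrt (Real.sqrt (T2F f1) * Real.sqrt (T2F g1)) *
        Real.sqrt (Real.sqrt (T2F f2) * Real.sqrt (T2F g2)) :=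
        mul_le_mul (Real.sqrt_le_sqrt hs1) (Real.sqrt_le_sqrt hs2)
          (Real.sqrt_nonneg _) (Real.sqrt_nonneg _)
    _ = (T2F f1) ^ ((1 : ℝ)/4) * (T2F f2) ^ ((1 : ℝ)/4) *
        (T2F g1) ^ ((1 : ℝ)/4) * (T2F g2) ^ ((1 : ℝ)/4) := by
        rw [Real.sqrt_mul (Real.sqrt_nonneg _), Real.sqrt_mul (Real.sqrt_nonneg _),
          ssr (T2F_nonneg f1), ssr (T2F_nonneg g1), ssr (T2F_nonneg f2), ssr (T2F_nonneg g2)]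
        ring
end

section
/- Let k1 = 2^{p1} and k2 = 2^{p2} be powers of two with p1, p2 ≥ 1, and let f_1,…,f_{k1}, g_1,…,g_{k2} : G → ℝ be finitely supported functions on an abelian group G. Then |∑_x (f_1 * ⋯ * f_{k1})(x) · (g_1 * ⋯ * g_{k2})(x)| ≤ ∏_{i=1}^{k1} T_{k1}(f_i)^{1/(2k1)} · ∏_{j=1}^{k2} T_{k2}(g_j)^{1/(2k2)}, where T_k(f) = ∑_x (f *_{k-1} f)^2(x) denotes the sum of squares of the k-fold convolution of f with itself. -/
open Finset
open scoped Classical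

variable {G : Type*} [AddCommGroup G]

/-- `n`-fold convolution `(f₁ * ⋯ * fₙ)(x) = ∑_{t₁ + ⋯ + tₙ = x} ∏ᵢ fᵢ(tᵢ)`. -/
noncomputable def multiConv (n : ℕ) (f : Fin n → G → ℝ) (x : G) : ℝ :=
  ∑ᶠ t : Fin n → G, if (∑ i, t i) = x then ∏ i, f i (t i) else 0

/-- `T_k(f) = ∑_x (f *_{k-1} f)(x)^2`. -/
noncomputable def TkF (k : ℕ) (f : G → ℝ) : ℝ :=
  ∑ᶠ x, (multiConv k (fun _ => f) x) ^ 2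

set_option linter.unusedSectionVars false
set_option linter.unusedVariables false

instance : CoeFun (AddMonoidAlgebra ℝ G) (fun _ => G → ℝ) := ⟨fun a => a.coeff⟩

abbrev AddMonoidAlgebra.support (a : AddMonoidAlgebra ℝ G) : Finset G := a.coeff.support


noncomputable def tau : AddMonoidAlgebra ℝ G →+* AddMonoidAlgebra ℝ G :=
  AddMonoidAlgebra.mapDomainRingHom ℝ (negAddMonoidHom : G →+ G)

lemma tau_apply (a : AddMonoidAlgebra ℝ G) (x : G) : tau a x = a (-x) := by
  show Finsupp.mapDomain (⇑(negAddMonoidHom : G →+ G)) a.coeff x = a (-x)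
  conv_lhs => rw [← neg_neg x]
  exact Finsupp.mapDomain_apply neg_injective a.coeff (-x)

lemma tau_tau (a : AddMonoidAlgebra ℝ G) : tau (tau a) = a := by
  ext x; rw [tau_apply, tau_apply, neg_neg]

noncomputable def inn (a b : AddMonoidAlgebra ℝ G) : ℝ := ∑ x ∈ a.support, a x * b x

lemma mul_apply_zero (a b : AddMonoidAlgebra ℝ G) : (a * b) 0 = inn a (tau b) := by
  rw [AddMonoidAlgebra.coeff_mul, inn, Finsupp.sum]
  refine Finset.sum_congr rfl fun y _ => ?_
  rw [Finsupp.sum]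
  have : ∀ z ∈ b.support, (if y + z = 0 then a y * b z else 0)
      = if -y = z then a y * b z else 0 := by
    intro z _; congr 1
    simp [add_eq_zero_iff_neg_eq]
  rw [Finset.sum_congr rfl this, Finset.sum_ite_eq]
  by_cases h : -y ∈ b.support
  · simp [h, tau_apply]
  · simp [h, tau_apply, Finsupp.notMem_support_iff.1 h]

lemma mul_apply' (u v : AddMonoidAlgebra ℝ G) (s : Finset G) (hs : u.support ⊆ s) (x : G) :
    (u * v) x = ∑ y ∈ s, u y * v (x - y) := by
  rw [AddMonoidAlgebra.coeff_mul]
  rw [Finsupp.sum, Finset.sum_subset hs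
    (by intro y _ hy; simp [Finsupp.notMem_support_iff.1 hy, Finsupp.sum])]
  refine Finset.sum_congr rfl fun y _ => ?_
  rw [Finsupp.sum]
  have : ∀ z ∈ v.support, (if y + z = x then u y * v z else 0)
      = if z = x - y then u y * v z else 0 := by
    intro z _; congr 1
    simp [eq_sub_iff_add_eq, add_comm]
  rw [Finset.sum_congr rfl this, Finset.sum_ite_eq']
  by_cases h : x - y ∈ v.support
  · simp [h]
  · simp [h, Finsupp.notMem_support_iff.1 h]

lemma prod_apply_fin (n : ℕ) (a : Fin n → AddMonoidAlgebra ℝ G) (S : Fin n → Finset G)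
    (hS : ∀ i, (a i).support ⊆ S i) (x : G) :
    (∏ i, a i) x = ∑ t ∈ Fintype.piFinset S, if (∑ i, t i) = x then ∏ i, a i (t i) else 0 := by
  induction n generalizing x with
  | zero =>
    rw [Fintype.piFinset_of_isEmpty]
    rw [show (Finset.univ : Finset (Fin 0 → G)) = {fun i => i.elim0} from Finset.univ_unique]
    simp [AddMonoidAlgebra.one_def, Finsupp.single_apply]
  | succ n ih =>
    have hsplit : Fintype.piFinset S =
        ((S 0 ×ˢ Fintype.piFinset (Fin.tail S)).map (Fin.consEquiv _).toEmbedding) := by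
      have := Finset.filter_piFinset_eq_map_consEquiv S (fun _ => True)
      simpa using this
    rw [hsplit, Finset.sum_map, Finset.sum_product]
    rw [Fin.prod_univ_succ, mul_apply' _ _ (S 0) (hS 0)]
    refine Finset.sum_congr rfl fun y hy => ?_
    rw [ih (fun i => a i.succ) (Fin.tail S) (fun i => hS i.succ), Finset.mul_sum]
    refine Finset.sum_congr rfl fun s hs => ?_
    have h1 : ∑ i, (Fin.consEquiv (fun _ => G) (y, s)) i = y + ∑ i, s i := by
      simp [Fin.sum_univ_succ]
    have h2 : ∏ i, (a i) ((Fin.consEquiv (fun _ => G) (y, s)) i)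
        = a 0 y * ∏ i, (a i.succ) (s i) := by
      simp [Fin.prod_univ_succ]
    simp only [Equiv.coe_toEmbedding]
    rw [h1, h2]
    by_cases hc : ∑ i, s i = x - y
    · rw [if_pos hc, if_pos (by rw [hc]; abel)]
    · rw [if_neg hc, if_neg (by intro h; exact hc (by rw [← h]; abel)), mul_zero]

lemma inn_eq_sum (a b : AddMonoidAlgebra ℝ G) (s : Finset G) (h : a.support ⊆ s) :
    inn a b = ∑ x ∈ s, a x * b x :=
  Finset.sum_subset h (by intro x _ hx; simp [Finsupp.notMem_support_iff.1 hx])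

lemma inn_self_eq_sum_sq (a : AddMonoidAlgebra ℝ G) (s : Finset G) (h : a.support ⊆ s) :
    inn a a = ∑ x ∈ s, a x ^ 2 := by
  rw [inn_eq_sum a a s h]; exact Finset.sum_congr rfl fun x _ => (sq (a x)).symm

lemma inn_self_nonneg (a : AddMonoidAlgebra ℝ G) : 0 ≤ inn a a :=
  Finset.sum_nonneg fun x _ => mul_self_nonneg _

lemma mul_self_apply_zero (c : AddMonoidAlgebra ℝ G) : (c * tau c) 0 = inn c c := by
  rw [mul_apply_zero, tau_tau]

lemma N_pow_zero_nonneg (a : AddMonoidAlgebra ℝ G) (m : ℕ) : 0 ≤ ((a * tau a) ^ m) 0 := by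
  rw [mul_pow, ← map_pow, mul_self_apply_zero]; exact inn_self_nonneg _

lemma tau_N (a : AddMonoidAlgebra ℝ G) : tau (a * tau a) = a * tau a := by
  rw [map_mul, tau_tau, mul_comm]

lemma cs_inn (c d : AddMonoidAlgebra ℝ G) :
    inn c d ≤ Real.sqrt (inn c c) * Real.sqrt (inn d d) := by
  set s := c.support ∪ d.support with hs
  rw [inn_eq_sum c d s Finset.subset_union_left,
    inn_self_eq_sum_sq c s Finset.subset_union_left,
    inn_self_eq_sum_sq d s Finset.subset_union_right]
  exact Real.sum_mul_le_sqrt_mul_sqrt s _ _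

lemma key_step (n : ℕ) (hn : 0 < n)
    (ih : ∀ (a : Fin n → AddMonoidAlgebra ℝ G),
      (∏ i, (a i * tau (a i))) 0 ≤ ∏ i, (((a i * tau (a i)) ^ n) 0) ^ ((n : ℝ)⁻¹))
    (a : Fin (n + n) → AddMonoidAlgebra ℝ G) :
    (∏ i, (a i * tau (a i))) 0 ≤ ∏ i, (((a i * tau (a i)) ^ (n + n)) 0) ^ (((n + n : ℕ) : ℝ)⁻¹) := by
  have hn' : (0:ℝ) < n := by exact_mod_cast hn
  set u := ∏ i : Fin n, a (Fin.castAdd n i) with hu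
  set v := ∏ i : Fin n, a (Fin.natAdd n i) with hv
  have hNu : (∏ i : Fin n, (a (Fin.castAdd n i) * tau (a (Fin.castAdd n i)))) = u * tau u := by
    rw [Finset.prod_mul_distrib, hu, map_prod]
  have hNv : (∏ i : Fin n, (a (Fin.natAdd n i) * tau (a (Fin.natAdd n i)))) = v * tau v := by
    rw [Finset.prod_mul_distrib, hv, map_prod]
  have hsplit : (∏ i, (a i * tau (a i))) = (u * tau u) * (v * tau v) := by
    rw [Fin.prod_univ_add, hNu, hNv]
  -- Cauchy–Schwarz
  have hcs : (∏ i, (a i * tau (a i))) 0 ≤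
      Real.sqrt (((u * tau u) ^ 2) 0) * Real.sqrt (((v * tau v) ^ 2) 0) := by
    rw [hsplit]
    have h1 : ((u * tau u) * (v * tau v)) 0 = inn (u * tau u) (v * tau v) := by
      rw [mul_apply_zero, tau_N]
    have h2 : ((u * tau u) ^ 2) 0 = inn (u * tau u) (u * tau u) := by
      rw [sq, mul_apply_zero, tau_N]
    have h3 : ((v * tau v) ^ 2) 0 = inn (v * tau v) (v * tau v) := by
      rw [sq, mul_apply_zero, tau_N]
    rw [h1, h2, h3]
    exact cs_inn _ _
  -- bound each square via ih
  have hindu : ∀ (b : Fin n → AddMonoidAlgebra ℝ G),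
      ((∏ i : Fin n, (b i * tau (b i))) ^ 2) 0 ≤
        ∏ i : Fin n, (((b i * tau (b i)) ^ (n + n)) 0) ^ ((n : ℝ)⁻¹) := by
    intro b
    have e1 : (∏ i : Fin n, (b i * tau (b i))) ^ 2 = ∏ i : Fin n, ((b i ^ 2) * tau (b i ^ 2)) := by
      rw [← Finset.prod_pow]
      exact Finset.prod_congr rfl fun i _ => by rw [map_pow]; ring
    have e2 : ∀ i : Fin n, ((b i ^ 2) * tau (b i ^ 2)) ^ n = (b i * tau (b i)) ^ (n + n) := by
      intro i
      rw [map_pow]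
      rw [show (b i ^ 2) * (tau (b i)) ^ 2 = (b i * tau (b i)) ^ 2 by ring]
      rw [← pow_mul, two_mul]
    calc ((∏ i : Fin n, (b i * tau (b i))) ^ 2) 0
        = ((∏ i : Fin n, ((b i ^ 2) * tau (b i ^ 2)) : AddMonoidAlgebra ℝ G)) 0 := by rw [e1]
      _ ≤ ∏ i : Fin n, ((((b i ^ 2) * tau (b i ^ 2)) ^ n : AddMonoidAlgebra ℝ G) 0) ^ ((n : ℝ)⁻¹) := ih _
      _ = ∏ i : Fin n, (((b i * tau (b i)) ^ (n + n) : AddMonoidAlgebra ℝ G) 0) ^ ((n : ℝ)⁻¹) := by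
          exact Finset.prod_congr rfl fun i _ => by rw [e2]
  -- sqrt of the product bound
  have hsq : ∀ (b : Fin n → AddMonoidAlgebra ℝ G),
      Real.sqrt (((∏ i : Fin n, (b i * tau (b i))) ^ 2) 0) ≤
        ∏ i : Fin n, (((b i * tau (b i)) ^ (n + n)) 0) ^ (((n + n : ℕ) : ℝ)⁻¹) := by
    intro b
    refine (Real.sqrt_le_sqrt (hindu b)).trans ?_
    rw [Real.sqrt_eq_rpow]
    rw [← Real.finset_prod_rpow _ _ (fun i _ => Real.rpow_nonneg (N_pow_zero_nonneg _ _) _) _]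
    refine le_of_eq (Finset.prod_congr rfl fun i _ => ?_)
    rw [← Real.rpow_mul (N_pow_zero_nonneg _ _)]
    congr 1
    push_cast
    field_simp
    ring
  have hA := hsq (fun i => a (Fin.castAdd n i))
  have hB := hsq (fun i => a (Fin.natAdd n i))
  rw [hNu] at hA
  rw [hNv] at hB
  calc (∏ i, (a i * tau (a i))) 0
      ≤ Real.sqrt (((u * tau u) ^ 2) 0) * Real.sqrt (((v * tau v) ^ 2) 0) := hcs
    _ ≤ (∏ i : Fin n, (((a (Fin.castAdd n i) * tau (a (Fin.castAdd n i))) ^ (n + n)) 0) ^ (((n + n : ℕ) : ℝ)⁻¹))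
        * (∏ i : Fin n, (((a (Fin.natAdd n i) * tau (a (Fin.natAdd n i))) ^ (n + n)) 0) ^ (((n + n : ℕ) : ℝ)⁻¹)) := by
        refine mul_le_mul hA hB (Real.sqrt_nonneg _) (Finset.prod_nonneg fun i _ => Real.rpow_nonneg (N_pow_zero_nonneg _ _) _)
    _ = ∏ i, (((a i * tau (a i)) ^ (n + n)) 0) ^ (((n + n : ℕ) : ℝ)⁻¹) := by
        rw [Fin.prod_univ_add]

lemma key (p : ℕ) : ∀ (a : Fin (2 ^ p) → AddMonoidAlgebra ℝ G),
    (∏ i, (a i * tau (a i))) 0 ≤ ∏ i, (((a i * tau (a i)) ^ (2 ^ p)) 0) ^ (((2 ^ p : ℕ) : ℝ)⁻¹) := by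
  induction p with
  | zero =>
    intro a
    simp [Fin.prod_univ_one]
  | succ p ih =>
    have h : 2 ^ (p + 1) = 2 ^ p + 2 ^ p := by rw [pow_succ, mul_two]
    rw [h]
    exact key_step (2 ^ p) (Nat.pow_pos (by norm_num)) ih

noncomputable def toA (f0 : G → ℝ) (h : (Function.support f0).Finite) : AddMonoidAlgebra ℝ G :=
  ⟨Finsupp.ofSupportFinite f0 h⟩

lemma toA_apply (f0 : G → ℝ) (h : (Function.support f0).Finite) (x : G) : toA f0 h x = f0 x :=
  congrFun Finsupp.ofSupportFinite_coe x

lemma multiConv_eq_prod (n : ℕ) (f : Fin n → G → ℝ)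
    (hf : ∀ i, (Function.support (f i)).Finite) (x : G) :
    multiConv n f x = (∏ i, toA (f i) (hf i)) x := by
  rw [prod_apply_fin n _ (fun i => (toA (f i) (hf i)).support) (fun i => le_refl _) x, multiConv]
  rw [finsum_congr (g := fun t : Fin n → G =>
      if (∑ i, t i) = x then ∏ i, toA (f i) (hf i) (t i) else 0)
    (fun t => by simp only [toA_apply])]
  apply finsum_eq_sum_of_support_subset
  intro t ht
  simp only [Function.mem_support] at ht
  simp only [Finset.coe_sort_coe, Finset.mem_coe, Fintype.mem_piFinset]
  intro i
  by_contra hc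
  apply ht
  have h0 : toA (f i) (hf i) (t i) = 0 := Finsupp.notMem_support_iff.1 hc
  have : (∏ j, toA (f j) (hf j) (t j)) = 0 := Finset.prod_eq_zero (Finset.mem_univ i) h0
  rw [this]
  simp

lemma TkF_eq (k : ℕ) (f0 : G → ℝ) (h : (Function.support f0).Finite) :
    TkF k f0 = ((toA f0 h * tau (toA f0 h)) ^ k) 0 := by
  have h1 : ∀ x, multiConv k (fun _ => f0) x = (toA f0 h ^ k) x := by
    intro x
    rw [multiConv_eq_prod k (fun _ => f0) (fun _ => h) x]
    congr 1
    rw [Finset.prod_const, Finset.card_univ, Fintype.card_fin]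
  rw [TkF]
  rw [finsum_congr (fun x => by rw [h1 x] :
    ∀ x, (multiConv k (fun _ => f0) x) ^ 2 = ((toA f0 h ^ k) x) ^ 2)]
  rw [finsum_eq_sum_of_support_subset _ (s := (toA f0 h ^ k).support) (by
    intro x hx
    simp only [Function.mem_support] at hx
    simp only [Finset.coe_sort_coe, Finset.mem_coe, Finsupp.mem_support_iff]
    intro hc; exact hx (by rw [hc]; norm_num))]
  rw [mul_pow, ← map_pow, mul_self_apply_zero, inn_self_eq_sum_sq _ _ (le_refl _)]

lemma TkF_nonneg (k : ℕ) (f0 : G → ℝ) (h : (Function.support f0).Finite) : 0 ≤ TkF k f0 := by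
  rw [TkF_eq k f0 h]; exact N_pow_zero_nonneg _ _

lemma sqrt_prod_bound (p : ℕ) (T : Fin (2 ^ p) → ℝ) (hT : ∀ i, 0 ≤ T i) :
    Real.sqrt (∏ i, T i ^ (((2 ^ p : ℕ) : ℝ)⁻¹)) ≤ ∏ i, T i ^ (1 / (2 * (2 ^ p : ℝ))) := by
  rw [Real.sqrt_eq_rpow]
  rw [← Real.finset_prod_rpow _ _ (fun i _ => Real.rpow_nonneg (hT i) _) _]
  refine le_of_eq (Finset.prod_congr rfl fun i _ => ?_)
  rw [← Real.rpow_mul (hT i)]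
  congr 1
  push_cast
  rw [eq_div_iff (by positivity : (2 : ℝ) * 2 ^ p ≠ 0)]
  have h0 : (2 : ℝ) ^ p ≠ 0 := by positivity
  field_simp

theorem stmt2 (p1 p2 : ℕ) (hp1 : 1 ≤ p1) (hp2 : 1 ≤ p2)
    (f : Fin (2 ^ p1) → G → ℝ) (g : Fin (2 ^ p2) → G → ℝ)
    (hf : ∀ i, (Function.support (f i)).Finite)
    (hg : ∀ j, (Function.support (g j)).Finite) :
    |∑ᶠ x, multiConv (2 ^ p1) f x * multiConv (2 ^ p2) g x| ≤
      (∏ i, (TkF (2 ^ p1) (f i)) ^ (1 / (2 * (2 ^ p1 : ℝ)))) *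
        ∏ j, (TkF (2 ^ p2) (g j)) ^ (1 / (2 * (2 ^ p2 : ℝ))) := by
  set P : AddMonoidAlgebra ℝ G := ∏ i, toA (f i) (hf i) with hP
  set Q : AddMonoidAlgebra ℝ G := ∏ j, toA (g j) (hg j) with hQ
  rw [finsum_congr (fun x => by
    rw [multiConv_eq_prod _ f hf x, multiConv_eq_prod _ g hg x] :
    ∀ x, multiConv (2 ^ p1) f x * multiConv (2 ^ p2) g x = P x * Q x)]
  rw [finsum_eq_sum_of_support_subset _ (s := P.support ∪ Q.support) (by
    intro x hx
    simp only [Function.mem_support] at hx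
    simp only [Finset.coe_sort_coe, Finset.mem_coe, Finset.mem_union, Finsupp.mem_support_iff]
    by_contra hc
    push_neg at hc
    exact hx (by rw [hc.1, zero_mul]))]
  have habs : |∑ x ∈ P.support ∪ Q.support, P x * Q x| ≤
      Real.sqrt (inn P P) * Real.sqrt (inn Q Q) := by
    calc |∑ x ∈ P.support ∪ Q.support, P x * Q x|
        ≤ ∑ x ∈ P.support ∪ Q.support, |P x| * |Q x| :=
          (Finset.abs_sum_le_sum_abs _ _).trans
            (le_of_eq (Finset.sum_congr rfl fun x _ => abs_mul _ _))
      _ ≤ Real.sqrt (∑ x ∈ P.support ∪ Q.support, |P x| ^ 2) *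
          Real.sqrt (∑ x ∈ P.support ∪ Q.support, |Q x| ^ 2) :=
          Real.sum_mul_le_sqrt_mul_sqrt _ _ _
      _ = Real.sqrt (inn P P) * Real.sqrt (inn Q Q) := by
          simp only [sq_abs]
          rw [inn_self_eq_sum_sq P (P.support ∪ Q.support) Finset.subset_union_left,
            inn_self_eq_sum_sq Q (P.support ∪ Q.support) Finset.subset_union_right]
  refine habs.trans ?_
  have hinnP : inn P P ≤ ∏ i, (TkF (2 ^ p1) (f i)) ^ (((2 ^ p1 : ℕ) : ℝ)⁻¹) := by
    have e : P * tau P = ∏ i, (toA (f i) (hf i) * tau (toA (f i) (hf i))) := by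
      rw [Finset.prod_mul_distrib, ← map_prod]
    calc inn P P = (∏ i, (toA (f i) (hf i) * tau (toA (f i) (hf i)))) 0 := by
          rw [← e, mul_self_apply_zero]
      _ ≤ ∏ i, (((toA (f i) (hf i) * tau (toA (f i) (hf i))) ^ (2 ^ p1)) 0) ^ (((2 ^ p1 : ℕ) : ℝ)⁻¹) :=
          key p1 _
      _ = ∏ i, (TkF (2 ^ p1) (f i)) ^ (((2 ^ p1 : ℕ) : ℝ)⁻¹) :=
          Finset.prod_congr rfl fun i _ => by rw [TkF_eq _ _ (hf i)]
  have hinnQ : inn Q Q ≤ ∏ j, (TkF (2 ^ p2) (g j)) ^ (((2 ^ p2 : ℕ) : ℝ)⁻¹) := by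
    have e : Q * tau Q = ∏ j, (toA (g j) (hg j) * tau (toA (g j) (hg j))) := by
      rw [Finset.prod_mul_distrib, ← map_prod]
    calc inn Q Q = (∏ j, (toA (g j) (hg j) * tau (toA (g j) (hg j)))) 0 := by
          rw [← e, mul_self_apply_zero]
      _ ≤ ∏ j, (((toA (g j) (hg j) * tau (toA (g j) (hg j))) ^ (2 ^ p2)) 0) ^ (((2 ^ p2 : ℕ) : ℝ)⁻¹) :=
          key p2 _
      _ = ∏ j, (TkF (2 ^ p2) (g j)) ^ (((2 ^ p2 : ℕ) : ℝ)⁻¹) :=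
          Finset.prod_congr rfl fun j _ => by rw [TkF_eq _ _ (hg j)]
  have hPbd : Real.sqrt (inn P P) ≤ ∏ i, (TkF (2 ^ p1) (f i)) ^ (1 / (2 * (2 ^ p1 : ℝ))) :=
    (Real.sqrt_le_sqrt hinnP).trans
      (sqrt_prod_bound p1 _ (fun i => TkF_nonneg _ _ (hf i)))
  have hQbd : Real.sqrt (inn Q Q) ≤ ∏ j, (TkF (2 ^ p2) (g j)) ^ (1 / (2 * (2 ^ p2 : ℝ))) :=
    (Real.sqrt_le_sqrt hinnQ).trans
      (sqrt_prod_bound p2 _ (fun j => TkF_nonneg _ _ (hg j)))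
  exact mul_le_mul hPbd hQbd (Real.sqrt_nonneg _)
    (Finset.prod_nonneg fun i _ => Real.rpow_nonneg (TkF_nonneg _ _ (hf i)) _)
end

section
/- Let q be prime, n ≥ 1, G = (ℤ/qℤ)^n, P a subspace of G, and k = 2^p a power of two with p ≥ 1. Then for every subset B ⊆ P, T_k(B) ≥ (|B|/|P|)^{2k} · T_k(P), where T_k(X) counts 2k-tuples from X summing equally in two groups of k. -/
open Finset
open scoped Classical

/-- `Tk k A` : number of `2k`-tuples from `A` with equal `k`-fold sums. -/
noncomputable def Tk {G : Type*} [AddCommGroup G] (k : ℕ) (A : Finset G) : ℕ :=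
  (((Fintype.piFinset fun _ : Fin k => A) ×ˢ (Fintype.piFinset fun _ : Fin k => A)).filter
    fun t => ∑ i, t.1 i = ∑ i, t.2 i).card

noncomputable def rcnt {G : Type*} [AddCommGroup G] (k : ℕ) (A : Finset G) (s : G) : ℕ :=
  ((Fintype.piFinset fun _ : Fin k => A).filter fun x => ∑ i, x i = s).card

lemma tk_eq {G : Type*} [AddCommGroup G] [Fintype G] (k : ℕ) (A : Finset G) :
    Tk k A = ∑ s : G, (rcnt k A s) ^ 2 := by
  classical
  unfold Tk rcnt
  rw [Finset.card_eq_sum_card_fiberwise (f := fun t => ∑ i, t.1 i) (t := Finset.univ)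
    (fun _ _ => mem_univ _)]
  refine Finset.sum_congr rfl fun s _ => ?_
  rw [sq, ← Finset.card_product]
  congr 1
  ext ⟨a, b⟩
  simp only [Finset.mem_filter, Finset.mem_product, Fintype.mem_piFinset]
  constructor
  · rintro ⟨⟨⟨ha, hb⟩, hab⟩, hs⟩
    exact ⟨⟨ha, hs⟩, hb, hab ▸ hs⟩
  · rintro ⟨⟨ha, hs⟩, hb, hs'⟩
    exact ⟨⟨⟨ha, hb⟩, hs.trans hs'.symm⟩, hs⟩

lemma rcnt_le {G : Type*} [AddCommGroup G] (k : ℕ) (A : Finset G) (s : G) :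
    rcnt (k + 1) A s ≤ A.card ^ k := by
  classical
  unfold rcnt
  calc ((Fintype.piFinset fun _ : Fin (k+1) => A).filter fun x => ∑ i, x i = s).card
      ≤ (Fintype.piFinset fun _ : Fin k => A).card := by
        apply Finset.card_le_card_of_injOn (fun x => fun i : Fin k => x i.castSucc)
        · intro x hx
          simp only [Finset.mem_coe, Finset.mem_filter, Fintype.mem_piFinset] at hx ⊢
          exact fun i => hx.1 _
        · intro x hx y hy hxy
          simp only [coe_filter, Set.mem_setOf_eq, Fintype.mem_piFinset] at hx hy
          funext j
          refine Fin.lastCases ?_ ?_ j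
          · have hx' := hx.2; have hy' := hy.2
            rw [Fin.sum_univ_castSucc] at hx' hy'
            have : ∀ i : Fin k, x i.castSucc = y i.castSucc := fun i => congrFun hxy i
            rw [Finset.sum_congr rfl (fun i _ => this i)] at hx'
            have := hx'.trans hy'.symm
            exact add_left_cancel this
          · intro i; exact congrFun hxy i
    _ = A.card ^ k := by simp [Fintype.card_piFinset]

lemma rcnt_sum {G : Type*} [AddCommGroup G] [Fintype G] (k : ℕ) (A : Finset G) :
    ∑ s : G, rcnt k A s = A.card ^ k := by
  classical
  unfold rcnt
  simp only [Finset.card_filter]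
  rw [Finset.sum_comm]
  simp [Fintype.card_piFinset]

theorem stmt4 (q n : ℕ) [Fact q.Prime] (hn : 1 ≤ n) (p : ℕ) (hp : 1 ≤ p)
    (P : Submodule (ZMod q) (Fin n → ZMod q))
    (B : Finset (Fin n → ZMod q)) (hB : ∀ x ∈ B, x ∈ P) :
    ((B.card : ℝ) / (P : Set (Fin n → ZMod q)).toFinset.card) ^ (2 * 2 ^ p) *
        (Tk (2 ^ p) (P : Set (Fin n → ZMod q)).toFinset : ℝ) ≤
      (Tk (2 ^ p) B : ℝ) := by
  classical
  set PF : Finset (Fin n → ZMod q) := (P : Set (Fin n → ZMod q)).toFinset with hPF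
  set k : ℕ := 2 ^ p with hk
  have hk1 : 1 ≤ k := Nat.one_le_two_pow
  have hkk : k = (k - 1) + 1 := (Nat.succ_pred_eq_of_pos hk1).symm
  set m : ℕ := PF.card with hm
  have hm1 : 1 ≤ m := Finset.card_pos.mpr ⟨0, by simp [hPF]⟩
  have hm0 : (0 : ℝ) < m := by exact_mod_cast hm1
  -- rcnt of B vanishes outside P
  have hBzero : ∀ s : Fin n → ZMod q, s ∉ PF → rcnt k B s = 0 := by
    intro s hs
    rw [rcnt, Finset.card_eq_zero]
    rw [Finset.eq_empty_iff_forall_notMem]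
    intro x hx
    simp only [Finset.mem_filter, Fintype.mem_piFinset] at hx
    apply hs
    rw [hPF, Set.mem_toFinset]
    rw [← hx.2]
    exact Submodule.sum_mem P fun i _ => hB _ (hx.1 i)
  -- T_k(B) ≥ |B|^{2k} / m
  have hTB : ((B.card : ℝ) ^ (2 * k)) / m ≤ (Tk k B : ℝ) := by
    rw [div_le_iff₀ hm0]
    have h1 : (Tk k B : ℝ) = ∑ s ∈ PF, ((rcnt k B s : ℝ)) ^ 2 := by
      rw [tk_eq]
      push_cast
      rw [← Finset.sum_subset (Finset.subset_univ PF)]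
      intro s _ hs
      simp [hBzero s hs]
    have h2 : ∑ s ∈ PF, ((rcnt k B s : ℝ)) = (B.card : ℝ) ^ k := by
      have := rcnt_sum k B
      rw [← Finset.sum_subset (Finset.subset_univ PF) (fun s _ hs => by
        simp [hBzero s hs])] at this
      exact_mod_cast congrArg (Nat.cast : ℕ → ℝ) this
    have := sq_sum_le_card_mul_sum_sq (s := PF) (f := fun s => (rcnt k B s : ℝ))
    rw [h2] at this
    rw [h1]
    calc (B.card : ℝ) ^ (2 * k) = ((B.card : ℝ) ^ k) ^ 2 := by ring
      _ ≤ m * ∑ s ∈ PF, ((rcnt k B s : ℝ)) ^ 2 := this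
      _ = (∑ s ∈ PF, ((rcnt k B s : ℝ)) ^ 2) * m := by ring
  -- T_k(P) ≤ m^{2k-1}
  have hTP : (Tk k PF : ℝ) ≤ (m : ℝ) ^ (2 * k - 1) := by
    have hnat : Tk k PF ≤ m ^ (2 * k - 1) := by
      rw [tk_eq]
      have step : ∀ s : Fin n → ZMod q, rcnt k PF s ^ 2 ≤ m ^ (k - 1) * rcnt k PF s := by
        intro s
        rw [sq]
        apply Nat.mul_le_mul_right
        rw [hkk]
        exact rcnt_le (k - 1) PF s
      calc ∑ s : (Fin n → ZMod q), rcnt k PF s ^ 2 ≤ ∑ s : (Fin n → ZMod q), m ^ (k - 1) * rcnt k PF s :=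
            Finset.sum_le_sum fun s _ => step s
        _ = m ^ (k - 1) * m ^ k := by rw [← Finset.mul_sum, rcnt_sum]
        _ = m ^ (2 * k - 1) := by
            rw [← pow_add]; congr 1; omega
      done
    exact_mod_cast hnat
  calc ((B.card : ℝ) / m) ^ (2 * k) * (Tk k PF : ℝ)
      ≤ ((B.card : ℝ) / m) ^ (2 * k) * (m : ℝ) ^ (2 * k - 1) := by
        apply mul_le_mul_of_nonneg_left hTP (pow_nonneg (div_nonneg (Nat.cast_nonneg _) hm0.le) _)
    _ = (B.card : ℝ) ^ (2 * k) / m := by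
        rw [div_pow, div_mul_eq_mul_div, div_eq_div_iff (pow_ne_zero _ hm0.ne') hm0.ne']
        rw [mul_assoc, ← pow_succ]
        congr 2
        omega
    _ ≤ (Tk k B : ℝ) := hTB
end
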